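/- arXiv:1807.08346 — 3 statements merged into one kernel-verified Lean document; each statement's English description precedes it below -/
import Mathlib

section
/- Let K ≥ 1 be a natural number and let λj > 0 and λm > 0 be real numbers, and set λ = λj + λm. Define π : {1,...,K+1} → ℝ by π(x) = (λj/λ)·(λm/λ)^(x−1) for 1 ≤ x ≤ K and π(K+1) = (λm/λ)^K. Then π satisfies the global balance equations of the Markov chain: λm·π(1) = λj·(1 − π(1)); λ·π(x) = λm·π(x−1) for every x with 2 ≤ x ≤ K; and λj·π(K+1) = λm·π(K). -/
/-- In the FIFO timeline model with `K` slots, rates `lj > 0` (source `j`),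
`lm > 0` (other sources) and total rate `l = lj + lm`, the vector
`π(x) = (lj/l)·(lm/l)^(x-1)` for `1 ≤ x ≤ K` and `π(K+1) = (lm/l)^K` satisfies the
global balance equations of the continuous-time Markov chain tracking the topmost
position of a post of source `j`:
`lm·π(1) = lj·(1 − π(1))`, `l·π(x) = lm·π(x−1)` for `2 ≤ x ≤ K`, and
`lj·π(K+1) = lm·π(K)`. -/
theorem fifo_stationary_satisfies_balance_equations
    (K : ℕ) (hK : 1 ≤ K) (lj lm : ℝ) (hlj : 0 < lj) (hlm : 0 < lm)
    (l : ℝ) (hl : l = lj + lm)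
    (π : ℕ → ℝ)
    (hπ : ∀ x, 1 ≤ x → x ≤ K → π x = (lj / l) * (lm / l) ^ (x - 1))
    (hπK1 : π (K + 1) = (lm / l) ^ K) :
    lm * π 1 = lj * (1 - π 1) ∧
      (∀ x, 2 ≤ x → x ≤ K → l * π x = lm * π (x - 1)) ∧
      lj * π (K + 1) = lm * π K := by
  have hl0 : l ≠ 0 := by rw [hl]; positivity
  refine ⟨?_, ?_, ?_⟩
  · rw [hπ 1 le_rfl hK]
    field_simp
    rw [hl]; ring
  · intro x h2 hxK
    rw [hπ x (by omega) hxK, hπ (x-1) (by omega) (by omega)]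
    have : x - 1 - 1 + 1 = x - 1 := by omega
    rw [← this, pow_succ]
    simp only [Nat.add_sub_cancel]
    field_simp
  · rw [hπK1, hπ K hK le_rfl]
    have : K - 1 + 1 = K := by omega
    rw [← this, pow_succ]
    simp only [Nat.add_sub_cancel]
    field_simp
end

section
/- Let K ≥ 1 be a natural number and let λj > 0 and λm > 0 be real numbers, and set λ = λj + λm. Suppose π : {1,...,K+1} → ℝ satisfies π(x) ≥ 0 for all x, Σ_{x=1}^{K+1} π(x) = 1, and the balance equations λm·π(1) = λj·(1 − π(1)), λ·π(x) = λm·π(x−1) for 2 ≤ x ≤ K, and λj·π(K+1) = λm·π(K). Then π is uniquely determined: π(x) = (λj/λ)·(λm/λ)^(x−1) for 1 ≤ x ≤ K and π(K+1) = (λm/λ)^K. -/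
/-- In the FIFO timeline model with `K` slots, rates `lj > 0`, `lm > 0` and
total rate `l = lj + lm`, any nonnegative, normalized solution `π` of the global balance
equations is uniquely determined: `π(x) = (lj/l)·(lm/l)^(x-1)` for `1 ≤ x ≤ K` and
`π(K+1) = (lm/l)^K`. -/
theorem fifo_stationary_unique
    (K : ℕ) (hK : 1 ≤ K) (lj lm : ℝ) (hlj : 0 < lj) (hlm : 0 < lm)
    (l : ℝ) (hl : l = lj + lm)
    (π : ℕ → ℝ)
    (hnonneg : ∀ x ∈ Finset.Icc 1 (K + 1), 0 ≤ π x)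
    (hsum : (∑ x ∈ Finset.Icc 1 (K + 1), π x) = 1)
    (hbal1 : lm * π 1 = lj * (1 - π 1))
    (hbal : ∀ x, 2 ≤ x → x ≤ K → l * π x = lm * π (x - 1))
    (hbalK1 : lj * π (K + 1) = lm * π K) :
    (∀ x, 1 ≤ x → x ≤ K → π x = (lj / l) * (lm / l) ^ (x - 1)) ∧
      π (K + 1) = (lm / l) ^ K := by
  have hlpos : 0 < l := by rw [hl]; positivity
  have hπ1 : π 1 = lj / l := by
    rw [eq_div_iff hlpos.ne', hl]; nlinarith [hbal1]
  have main : ∀ x, 1 ≤ x → x ≤ K → π x = (lj / l) * (lm / l) ^ (x - 1) := by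
    intro x hx
    induction x, hx using Nat.le_induction with
    | base => intro _; simpa using hπ1
    | succ n hn ih =>
      intro hnK
      obtain ⟨m, rfl⟩ : ∃ m, n = m + 1 := ⟨n - 1, by omega⟩
      have hrec := hbal (m + 1 + 1) (by omega) hnK
      have ihv := ih (by omega)
      simp only [Nat.add_sub_cancel] at hrec ihv ⊢
      have hstep : π (m + 1 + 1) = (lm / l) * π (m + 1) := by
        field_simp
        linarith [hrec]
      rw [hstep, ihv, pow_succ]
      ring
  refine ⟨main, ?_⟩
  have hK' := main K hK le_rfl
  have : π (K + 1) = (lm / lj) * π K := by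
    field_simp
    linarith [hbalK1]
  rw [this, hK']
  have : K = (K - 1) + 1 := by omega
  rw [this, pow_succ, Nat.add_sub_cancel]
  field_simp
end

section
/- (Proposition 1, FIFO visibility.) Let K ≥ 1 be a natural number and let λ_{ij} > 0 and λ_{i,−j} > 0 be real numbers, and set λ_i = λ_{ij} + λ_{i,−j}. Let π : {1,...,K+1} → ℝ be the unique probability vector satisfying the balance equations λ_{i,−j}·π(1) = λ_{ij}·(1 − π(1)), λ_i·π(x) = λ_{i,−j}·π(x−1) for 2 ≤ x ≤ K, and λ_{ij}·π(K+1) = λ_{i,−j}·π(K). Then the visibility of source j in the timeline of user i, defined as π_{ij} = 1 − π(K+1), satisfies π_{ij} = 1 − (λ_{i,−j}/λ_i)^K. -/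
/-- Proposition 1, FIFO visibility: Let `K ≥ 1`, `lij > 0` be the effective
rate of source `j` into the timeline of user `i`, `lmj > 0` (denoted `λ_{i,−j}`) the
aggregate rate of the other sources, and `li = lij + lmj` the total rate. If `π` is the
(unique) probability vector on `{1, …, K+1}` satisfying the global balance equations of
the FIFO timeline Markov chain, then the visibility `π_{ij} = 1 − π(K+1)` of source `j`
satisfies `π_{ij} = 1 − (λ_{i,−j}/λ_i)^K`. -/
theorem fifo_visibility
    (K : ℕ) (hK : 1 ≤ K) (lij lmj : ℝ) (hlij : 0 < lij) (hlmj : 0 < lmj)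
    (li : ℝ) (hli : li = lij + lmj)
    (π : ℕ → ℝ)
    (hnonneg : ∀ x ∈ Finset.Icc 1 (K + 1), 0 ≤ π x)
    (hsum : (∑ x ∈ Finset.Icc 1 (K + 1), π x) = 1)
    (hbal1 : lmj * π 1 = lij * (1 - π 1))
    (hbal : ∀ x, 2 ≤ x → x ≤ K → li * π x = lmj * π (x - 1))
    (hbalK1 : lij * π (K + 1) = lmj * π K)
    (πij : ℝ) (hπij : πij = 1 - π (K + 1)) :
    πij = 1 - (lmj / li) ^ K := by
  have hli0 : 0 < li := by rw [hli]; linarith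
  have h1 : π 1 = lij / li := by
    field_simp
    nlinarith [hbal1]
  have key : ∀ x, 1 ≤ x → x ≤ K → π x = (lmj / li) ^ (x - 1) * (lij / li) := by
    intro x
    induction x with
    | zero => intro h; omega
    | succ n ih =>
      intro _ hxK
      rcases Nat.eq_zero_or_pos n with h0 | hn
      · subst h0; simpa using h1
      · have hb := hbal (n + 1) (by omega) hxK
        have hpn : π n = (lmj / li) ^ (n - 1) * (lij / li) := ih hn (by omega)
        have : π (n + 1) = (lmj / li) * π n := by
          field_simp at hb ⊢
          rw [Nat.add_sub_cancel] at hb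
          linarith [hb]
        rw [this, hpn]
        have : n + 1 - 1 = (n - 1) + 1 := by omega
        rw [this, pow_succ]
        ring
  have hKe : π K = (lmj / li) ^ (K - 1) * (lij / li) := key K hK le_rfl
  have hK1 : π (K + 1) = (lmj / li) ^ K := by
    have : π (K + 1) = (lmj / lij) * π K := by
      field_simp at hbalK1 ⊢
      linarith [hbalK1]
    rw [this, hKe]
    have hKs : K = (K - 1) + 1 := by omega
    rw [hKs, pow_succ, Nat.add_sub_cancel]
    field_simp
  rw [hπij, hK1]
end
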